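/- The number of logical qudits encoded by the GB code GB(a,b), namely k = 2ℓ - rank H_X - rank H_Z, equals 2·deg(gcd(a(x), b(x), x^ℓ - 1)). -/

import Mathlib

open Polynomial Matrix
open scoped Classical
open Fin.NatCast Fin.CommRing

/-- The `ℓ × ℓ` cyclic permutation matrix `P` with `P eᵢ = e_{i+1 mod ℓ}`. -/
def cyclicP (F : Type*) [Semiring F] (n : ℕ) [NeZero n] : Matrix (Fin n) (Fin n) F :=
  Matrix.of fun i j => if i = j + 1 then 1 else 0

lemma cyclicP_pow (F : Type*) [Field F] (n : ℕ) [NeZero n] (k : ℕ) :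
    (cyclicP F n) ^ k = Matrix.of fun i j => if i = j + (k : Fin n) then 1 else 0 := by
  induction k with
  | zero => ext i j; simp [Matrix.one_apply, eq_comm]
  | succ k ih =>
    ext i j
    rw [pow_succ, ih]
    simp only [Matrix.mul_apply, Matrix.of_apply, cyclicP, mul_ite, mul_one, mul_zero,
      Finset.sum_ite_eq', Finset.mem_univ, if_true]
    have : ((k+1 : ℕ) : Fin n) = (k : Fin n) + 1 := by push_cast; ring
    rw [this]
    congr 1
    · rw [eq_iff_iff]; constructor <;> intro h <;> rw [h] <;> ring

lemma cyclicP_pow_self (F : Type*) [Field F] (n : ℕ) [NeZero n] :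
    (cyclicP F n) ^ n = 1 := by
  rw [cyclicP_pow]
  ext i j
  simp [Matrix.one_apply, Fin.natCast_self]

noncomputable def phi (F : Type*) [Field F] (n : ℕ) [NeZero n] :
    Polynomial F →ₗ[F] (Fin n → F) where
  toFun p := (aeval (cyclicP F n) p).mulVec (Pi.single 0 1)
  map_add' p q := by funext i; simp [Matrix.add_mulVec]
  map_smul' c p := by funext i; simp [Matrix.smul_mulVec]

lemma phi_apply {F : Type*} [Field F] {n : ℕ} [NeZero n] (p : Polynomial F) :
    phi F n p = (aeval (cyclicP F n) p).mulVec (Pi.single 0 1) := rfl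

lemma phi_coeff {F : Type*} [Field F] {n : ℕ} [NeZero n] (p : Polynomial F)
    (hp : p.natDegree < n) (i : Fin n) : phi F n p i = p.coeff (i : ℕ) := by
  rw [phi_apply, Polynomial.aeval_eq_sum_range' hp, Matrix.mulVec_single_one]
  simp only [Matrix.col_apply, Matrix.sum_apply, Matrix.smul_apply, cyclicP_pow, Matrix.of_apply, zero_add,
    smul_eq_mul, mul_ite, mul_one, mul_zero]
  rw [Finset.sum_congr rfl (g := fun k => if (i:ℕ) = k then p.coeff k else 0)
    (fun k hk => by
      have hk' : ((k : Fin n) : ℕ) = k := Fin.val_cast_of_lt (Finset.mem_range.mp hk)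
      congr 1
      rw [eq_iff_iff, Fin.ext_iff, hk']),
    Finset.sum_ite_eq]
  simp [Finset.mem_range.mpr (lt_of_lt_of_le i.isLt (le_refl n))]

lemma li_phi {F : Type*} [Field F] {n : ℕ} [NeZero n] (p : Polynomial F) (hp : p ≠ 0)
    (m : ℕ) (hm : m + p.natDegree ≤ n) :
    LinearIndependent F (fun j : Fin m => phi F n (X ^ (j : ℕ) * p)) := by
  rw [Fintype.linearIndependent_iff]
  intro t ht j
  have hm1 : 1 ≤ m := Nat.one_le_iff_ne_zero.mpr fun h => (h ▸ j).elim0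
  set s : Polynomial F := ∑ i : Fin m, Polynomial.C (t i) * X ^ (i : ℕ) with hs
  have hsp : s * p = ∑ i : Fin m, t i • (X ^ (i : ℕ) * p) := by
    rw [Finset.sum_mul]
    refine Finset.sum_congr rfl fun i _ => ?_
    rw [Polynomial.smul_eq_C_mul, mul_assoc]
  have hdeg : (s * p).natDegree ≤ n - 1 := by
    rw [hsp]
    refine Polynomial.natDegree_sum_le_of_forall_le _ _ fun i _ => ?_
    calc (t i • (X ^ (i : ℕ) * p)).natDegree ≤ (X ^ (i : ℕ) * p).natDegree :=
          Polynomial.natDegree_smul_le _ _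
      _ ≤ (X ^ (i : ℕ) : Polynomial F).natDegree + p.natDegree := Polynomial.natDegree_mul_le
      _ ≤ (i : ℕ) + p.natDegree := by rw [Polynomial.natDegree_X_pow]
      _ ≤ (m - 1) + p.natDegree := by
          have := i.isLt; omega
      _ ≤ n - 1 := by omega
  have hdn : (s * p).natDegree < n := lt_of_le_of_lt hdeg (by have := NeZero.pos n; omega)
  have hphi : phi F n (s * p) = 0 := by
    rw [hsp, map_sum]
    simpa using ht
  have hsp0 : s * p = 0 := by
    ext k
    by_cases hk : k < n
    · have := phi_coeff (s * p) hdn ⟨k, hk⟩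
      rw [hphi] at this
      simpa using this.symm
    · exact Polynomial.coeff_eq_zero_of_natDegree_lt (lt_of_lt_of_le hdn (by omega))
  have hs0 : s = 0 := by
    rcases mul_eq_zero.mp hsp0 with h | h
    · exact h
    · exact absurd h hp
  have : s.coeff (j : ℕ) = t j := by
    rw [hs]
    simp only [Polynomial.finset_sum_coeff, Polynomial.coeff_C_mul, Polynomial.coeff_X_pow]
    rw [Finset.sum_eq_single j]
    · simp
    · intro i _ hij
      have : (i : ℕ) ≠ (j : ℕ) := fun h => hij (Fin.ext h)
      simp [Ne.symm this]
    · simp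
  rw [hs0] at this
  simpa using this.symm

lemma mulVec_phi {F : Type*} [Field F] {n : ℕ} [NeZero n] (f p : Polynomial F) :
    (aeval (cyclicP F n) f).mulVec (phi F n p) = phi F n (f * p) := by
  rw [phi_apply, phi_apply, Matrix.mulVec_mulVec, ← _root_.map_mul]

lemma aeval_q_eq_zero {F : Type*} [Field F] {n : ℕ} [NeZero n]
    (Q : Matrix (Fin n) (Fin n) F) (hQ : Q ^ n = 1) :
    aeval Q ((X : Polynomial F) ^ n - 1) = 0 := by
  simp [map_sub, hQ]

lemma natDegree_q {F : Type*} [Field F] {n : ℕ} [NeZero n] :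
    ((X : Polynomial F) ^ n - 1).natDegree = n := by
  have : ((X : Polynomial F) ^ n - 1) = X ^ n - Polynomial.C 1 := by rw [Polynomial.C_1]
  rw [this, Polynomial.natDegree_X_pow_sub_C]

lemma q_ne_zero {F : Type*} [Field F] {n : ℕ} [NeZero n] :
    ((X : Polynomial F) ^ n - 1) ≠ 0 := by
  have h := Polynomial.monic_X_pow_sub_C (1 : F) (NeZero.ne n)
  have : ((X : Polynomial F) ^ n - 1) = X ^ n - Polynomial.C 1 := by rw [Polynomial.C_1]
  rw [this]
  exact h.ne_zero

lemma rank_aeval_cyclicP {F : Type*} [Field F] {n : ℕ} [NeZero n] (g : Polynomial F)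
    (hg : g ∣ ((X : Polynomial F) ^ n - 1)) :
    (aeval (cyclicP F n) g).rank = n - g.natDegree := by
  set q : Polynomial F := (X : Polynomial F) ^ n - 1 with hq
  have hq0 : q ≠ 0 := q_ne_zero
  have hg0 : g ≠ 0 := fun h => hq0 (by simpa [h] using hg)
  obtain ⟨c, hc⟩ := hg
  have hc0 : c ≠ 0 := fun h => hq0 (by simp [hc, h])
  have hdeg : g.natDegree + c.natDegree = n := by
    rw [← Polynomial.natDegree_mul hg0 hc0, ← hc, natDegree_q]
  set d : ℕ := g.natDegree with hd
  set M : Matrix (Fin n) (Fin n) F := aeval (cyclicP F n) g with hM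
  have hrange : n - d ≤ Module.finrank F (LinearMap.range M.mulVecLin) := by
    have hli := li_phi (n := n) g hg0 (n - d) (by omega)
    have hsub : Submodule.span F (Set.range fun j : Fin (n - d) => phi F n (X ^ (j : ℕ) * g))
        ≤ LinearMap.range M.mulVecLin := by
      rw [Submodule.span_le]
      rintro _ ⟨j, rfl⟩
      refine ⟨phi F n (X ^ (j : ℕ)), ?_⟩
      rw [Matrix.mulVecLin_apply, mulVec_phi, mul_comm]
    calc n - d = Module.finrank F (Submodule.span F
          (Set.range fun j : Fin (n - d) => phi F n (X ^ (j : ℕ) * g))) := by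
          rw [finrank_span_eq_card hli, Fintype.card_fin]
      _ ≤ _ := Submodule.finrank_mono hsub
  have hker : d ≤ Module.finrank F (LinearMap.ker M.mulVecLin) := by
    have hli := li_phi (n := n) c hc0 d (by omega)
    have hsub : Submodule.span F (Set.range fun j : Fin d => phi F n (X ^ (j : ℕ) * c))
        ≤ LinearMap.ker M.mulVecLin := by
      rw [Submodule.span_le]
      rintro _ ⟨j, rfl⟩
      rw [SetLike.mem_coe, LinearMap.mem_ker, Matrix.mulVecLin_apply, mulVec_phi]
      have : g * (X ^ (j : ℕ) * c) = X ^ (j : ℕ) * q := by rw [hc]; ring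
      have hphiq : phi F n q = 0 := by
        rw [hq, phi_apply, aeval_q_eq_zero _ (cyclicP_pow_self F n), Matrix.zero_mulVec]
      rw [this, ← mulVec_phi, hphiq, Matrix.mulVec_zero]
    calc d = Module.finrank F (Submodule.span F
          (Set.range fun j : Fin d => phi F n (X ^ (j : ℕ) * c))) := by
          rw [finrank_span_eq_card hli, Fintype.card_fin]
      _ ≤ _ := Submodule.finrank_mono hsub
  have hrn := LinearMap.finrank_range_add_finrank_ker M.mulVecLin
  rw [Module.finrank_pi, Fintype.card_fin] at hrn
  have hdn : d ≤ n := by omega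
  show Module.finrank F (LinearMap.range M.mulVecLin) = n - d
  omega

lemma aeval_transpose {F : Type*} [Field F] {n : ℕ} (Q : Matrix (Fin n) (Fin n) F)
    (p : Polynomial F) : (aeval Q p)ᵀ = aeval Qᵀ p := by
  rw [Polynomial.aeval_eq_sum_range (x := Q), Polynomial.aeval_eq_sum_range (x := Qᵀ)]
  rw [Matrix.transpose_sum]
  refine Finset.sum_congr rfl fun i _ => ?_
  rw [Matrix.transpose_smul, Matrix.transpose_pow]

lemma rank_fromColumns_eq {F : Type*} [Field F] {n : ℕ} [NeZero n]
    (Q : Matrix (Fin n) (Fin n) F) (hQ : aeval Q ((X : Polynomial F) ^ n - 1) = 0)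
    (a b g : Polynomial F) (hga : g ∣ a) (hgb : g ∣ b)
    (hcomb : ∃ u v w : Polynomial F,
      g = a * u + b * v + ((X : Polynomial F) ^ n - 1) * w) :
    (Matrix.fromCols (aeval Q a) (aeval Q b)).rank = (aeval Q g).rank := by
  obtain ⟨a₁, rfl⟩ := hga
  obtain ⟨b₁, rfl⟩ := hgb
  obtain ⟨u, v, w, hw⟩ := hcomb
  apply le_antisymm
  · have h1 : Matrix.fromCols (aeval Q (g * a₁)) (aeval Q (g * b₁))
        = aeval Q g * Matrix.fromCols (aeval Q a₁) (aeval Q b₁) := by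
      rw [Matrix.mul_fromCols, ← _root_.map_mul, ← _root_.map_mul]
    rw [h1]
    exact Matrix.rank_mul_le_left _ _
  · have h2 : aeval Q g = Matrix.fromCols (aeval Q (g * a₁)) (aeval Q (g * b₁)) *
        Matrix.fromRows (aeval Q u) (aeval Q v) := by
      rw [Matrix.fromCols_mul_fromRows, ← _root_.map_mul, ← _root_.map_mul, ← map_add]
      conv_lhs => rw [hw]
      rw [map_add, _root_.map_mul, hQ, zero_mul, add_zero]
    rw [h2]
    exact Matrix.rank_mul_le_left _ _

/-- The number of logical qudits of `GB(a,b)`, `k = 2ℓ - rank H_X - rank H_Z`,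
equals `2 · deg gcd(a, b, x^ℓ - 1)`. -/
theorem stmt_5 (F : Type*) [Field F] [Fintype F] (ℓ : ℕ) [NeZero ℓ] (a b : Polynomial F)
    (ha : a.natDegree < ℓ) (hb : b.natDegree < ℓ) :
    2 * ℓ -
        (Matrix.fromCols (Polynomial.aeval (cyclicP F ℓ) a)
          (Polynomial.aeval (cyclicP F ℓ) b)).rank -
        (Matrix.fromCols ((Polynomial.aeval (cyclicP F ℓ) b)ᵀ)
          (-(Polynomial.aeval (cyclicP F ℓ) a)ᵀ)).rank =
      2 * (EuclideanDomain.gcd (EuclideanDomain.gcd a b)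
        ((X : Polynomial F) ^ ℓ - 1)).natDegree := by
  set P : Matrix (Fin ℓ) (Fin ℓ) F := cyclicP F ℓ with hP
  set q : Polynomial F := (X : Polynomial F) ^ ℓ - 1 with hq
  set G : Polynomial F := EuclideanDomain.gcd a b with hG
  set g : Polynomial F := EuclideanDomain.gcd G q with hg
  have hqP : aeval P q = 0 := aeval_q_eq_zero _ (cyclicP_pow_self F ℓ)
  have hPT : Pᵀ ^ ℓ = 1 := by
    rw [← Matrix.transpose_pow, cyclicP_pow_self, Matrix.transpose_one]
  have hqPT : aeval Pᵀ q = 0 := aeval_q_eq_zero _ hPT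
  have hGa : G ∣ a := EuclideanDomain.gcd_dvd_left a b
  have hGb : G ∣ b := EuclideanDomain.gcd_dvd_right a b
  have hga : g ∣ a := (EuclideanDomain.gcd_dvd_left G q).trans hGa
  have hgb : g ∣ b := (EuclideanDomain.gcd_dvd_left G q).trans hGb
  have hgq : g ∣ q := EuclideanDomain.gcd_dvd_right G q
  have hbez1 : g = G * EuclideanDomain.gcdA G q + q * EuclideanDomain.gcdB G q :=
    EuclideanDomain.gcd_eq_gcd_ab G q
  have hbez2 : G = a * EuclideanDomain.gcdA a b + b * EuclideanDomain.gcdB a b :=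
    EuclideanDomain.gcd_eq_gcd_ab a b
  set s := EuclideanDomain.gcdA G q
  set t := EuclideanDomain.gcdB G q
  set u := EuclideanDomain.gcdA a b
  set v := EuclideanDomain.gcdB a b
  have hcomb : g = a * (u * s) + b * (v * s) + q * t := by
    rw [hbez1, hbez2]; ring
  have hd : g.natDegree ≤ ℓ := by
    have := Polynomial.natDegree_le_of_dvd hgq q_ne_zero
    rwa [natDegree_q] at this
  have hrg : (aeval P g).rank = ℓ - g.natDegree := rank_aeval_cyclicP g hgq
  have hrX : (Matrix.fromCols (aeval P a) (aeval P b)).rank = ℓ - g.natDegree := by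
    rw [rank_fromColumns_eq P hqP a b g hga hgb ⟨u * s, v * s, t, hcomb⟩, hrg]
  have hrZ : (Matrix.fromCols ((aeval P b)ᵀ) (-(aeval P a)ᵀ)).rank = ℓ - g.natDegree := by
    have e1 : (aeval P b)ᵀ = aeval Pᵀ b := aeval_transpose P b
    have e2 : (-(aeval P a)ᵀ) = aeval Pᵀ (-a) := by
      rw [map_neg, ← aeval_transpose]
    rw [e1, e2, rank_fromColumns_eq Pᵀ hqPT b (-a) g hgb (hga.neg_right)
      ⟨v * s, -(u * s), t, by rw [hcomb]; ring⟩]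
    rw [← aeval_transpose, Matrix.rank_transpose, hrg]
  rw [hrX, hrZ]
  omega
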